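/- arXiv:2012.13833 — 2 statements merged into one kernel-verified Lean document; each statement's English description precedes it below -/
import Mathlib

section
/- Let ε > 0, let a : ℝ^d × ℝ^d → ℂ be a Schwartz symbol, and let φ : ℝ^d → ℂ be Schwartz. Define the Weyl quantization (a^W φ)(x) = (2π)^{−d} ∫_{ℝ^d} ( ∫_{ℝ^d} a((x+y)/2, ε k) φ(y) e^{i(x−y)·k} dy ) dk (iterated integral, inner in y, outer in k). Then the quantum expectation equals the phase-space pairing with the Wigner transform: ∫_{ℝ^d} conj(φ(x)) (a^W φ)(x) dx = ∫_{ℝ^d×ℝ^d} a(x,k) W^ε[φ](x,k) dx dk. -/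
open MeasureTheory Complex
open scoped SchwartzMap

noncomputable section

/-- The Wigner transform `W^ε[φ₁,φ₂]` of a pair of functions on `ℝ^d`. -/
def wigner (d : ℕ) (ε : ℝ) (φ₁ φ₂ : EuclideanSpace ℝ (Fin d) → ℂ)
    (x k : EuclideanSpace ℝ (Fin d)) : ℂ :=
  ((((2 * Real.pi) ^ d)⁻¹ : ℝ) : ℂ) * ∫ y : EuclideanSpace ℝ (Fin d),
    Complex.exp (Complex.I * ((inner ℝ k y : ℝ) : ℂ)) * φ₁ (x - (ε / 2) • y) *
      (starRingEnd ℂ) (φ₂ (x + (ε / 2) • y))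

/-- The Weyl quantization `a^W(x, εD_x)` of a phase-space symbol `a`, as an iterated
integral (inner in `y`, outer in `k`). -/
def weylQuant (d : ℕ) (ε : ℝ)
    (a : EuclideanSpace ℝ (Fin d) × EuclideanSpace ℝ (Fin d) → ℂ)
    (φ : EuclideanSpace ℝ (Fin d) → ℂ) (x : EuclideanSpace ℝ (Fin d)) : ℂ :=
  ((((2 * Real.pi) ^ d)⁻¹ : ℝ) : ℂ) * ∫ k : EuclideanSpace ℝ (Fin d),
    ∫ y : EuclideanSpace ℝ (Fin d),
      a ((2 : ℝ)⁻¹ • (x + y), ε • k) * φ y *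
        Complex.exp (Complex.I * ((inner ℝ (x - y) k : ℝ) : ℂ))


namespace WeylAux

open SchwartzMap
open scoped ENNReal

abbrev Ed (d : ℕ) := EuclideanSpace ℝ (Fin d)

variable {d : ℕ}


lemma measure_smul_prod {α β : Type*} [MeasurableSpace α] [MeasurableSpace β]
    (c : ℝ≥0∞) (μ : Measure α) (ν : Measure β) [SFinite μ] [SFinite ν] :
    (c • μ).prod ν = c • μ.prod ν := by
  ext s hs
  rw [Measure.prod_apply hs, lintegral_smul_measure, Measure.smul_apply,
    Measure.prod_apply hs, smul_eq_mul]

lemma measure_prod_smul {α β : Type*} [MeasurableSpace α] [MeasurableSpace β]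
    (c : ℝ≥0∞) (μ : Measure α) (ν : Measure β) [SFinite μ] [SFinite ν] :
    μ.prod (c • ν) = c • μ.prod ν := by
  ext s hs
  rw [Measure.prod_apply hs, Measure.smul_apply, Measure.prod_apply hs]
  simp_rw [Measure.smul_apply, smul_eq_mul]
  rw [lintegral_const_mul _ (measurable_measure_prodMk_left hs)]

lemma mp_scale {c : ℝ} (hc : c ≠ 0) :
    MeasurePreserving (fun p : Ed d × Ed d => (c⁻¹ • p.1, c • p.2)) volume volume := by
  constructor
  · fun_prop
  · show Measure.map (Prod.map (c⁻¹ • ·) (c • ·)) volume = volume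
    rw [Measure.volume_eq_prod, ← Measure.map_prod_map _ _ (by fun_prop) (by fun_prop),
      Measure.map_addHaar_smul _ (inv_ne_zero hc), Measure.map_addHaar_smul _ hc,
      measure_smul_prod, measure_prod_smul, smul_smul]
    have h1 : ((c⁻¹ : ℝ) ^ Module.finrank ℝ (Ed d))⁻¹ = c ^ Module.finrank ℝ (Ed d) := by
      rw [inv_pow, inv_inv]
    rw [h1, ← ENNReal.ofReal_mul (abs_nonneg _), abs_inv, mul_inv_cancel₀, ENNReal.ofReal_one,
      one_smul]
    · exact abs_ne_zero.mpr (pow_ne_zero _ hc)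

lemma mp_shear (c : ℝ) :
    MeasurePreserving (fun p : Ed d × Ed d => (p.1, p.2 + c • p.1)) volume volume := by
  rw [Measure.volume_eq_prod]
  exact (MeasurePreserving.id _).skew_product (f := id) (g := fun x u => u + c • x)
    (by fun_prop) (Filter.Eventually.of_forall fun x => map_add_right_eq_self volume (c • x))

lemma mp_neg2 :
    MeasurePreserving (fun p : Ed d × Ed d => (p.1, -p.2)) volume volume := by
  rw [Measure.volume_eq_prod]
  exact (MeasurePreserving.id _).prod (Measure.measurePreserving_neg _)

def Phi (d : ℕ) (ε : ℝ) (q : (Ed d × Ed d) × Ed d) : Ed d × (Ed d × Ed d) :=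
  (q.1.1 + (ε / 2) • q.2, (ε⁻¹ • q.1.2, q.1.1 - (ε / 2) • q.2))

lemma mp_swap2 : MeasurePreserving (Prod.swap : Ed d × Ed d → Ed d × Ed d) volume volume :=
  Measure.measurePreserving_swap

lemma mp_first {f : Ed d × Ed d → Ed d × Ed d}
    (hf : MeasurePreserving f volume volume) :
    MeasurePreserving (Prod.map f (id : Ed d → Ed d)) volume volume := by
  rw [Measure.volume_eq_prod]
  exact hf.prod (MeasurePreserving.id _)

lemma mp_second {f : Ed d × Ed d → Ed d × Ed d}
    (hf : MeasurePreserving f volume volume) :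
    MeasurePreserving (Prod.map (id : Ed d → Ed d) f) volume volume := by
  rw [Measure.volume_eq_prod]
  exact (MeasurePreserving.id _).prod hf

lemma mp_assoc : MeasurePreserving
    (fun q : (Ed d × Ed d) × Ed d => (q.1.1, (q.1.2, q.2)))
    volume volume :=
  measurePreserving_prodAssoc volume volume volume

lemma mp_assoc_symm : MeasurePreserving
    (fun p : Ed d × (Ed d × Ed d) => ((p.1, p.2.1), p.2.2))
    volume volume :=
  (measurePreserving_prodAssoc volume volume volume).symm
    (MeasurableEquiv.prodAssoc : (Ed d × Ed d) × Ed d ≃ᵐ Ed d × (Ed d × Ed d))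

lemma mp_Phi (ε : ℝ) (hε : ε ≠ 0) :
    MeasurePreserving (Phi d ε) volume volume := by
  have key : Phi d ε =
      (Prod.map (id : Ed d → Ed d) (Prod.swap : Ed d × Ed d → Ed d × Ed d)) ∘
      (fun q : (Ed d × Ed d) × Ed d => (q.1.1, (q.1.2, q.2))) ∘
      (Prod.map (fun p : Ed d × Ed d => (p.1, p.2 + (1 : ℝ) • p.1)) (id : Ed d → Ed d)) ∘
      (Prod.map (fun p : Ed d × Ed d => (p.1, -p.2)) (id : Ed d → Ed d)) ∘
      (Prod.map (Prod.swap : Ed d × Ed d → Ed d × Ed d) (id : Ed d → Ed d)) ∘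
      (Prod.map (fun p : Ed d × Ed d => (p.1, p.2 + (2⁻¹ : ℝ) • p.1)) (id : Ed d → Ed d)) ∘
      (Prod.map (Prod.swap : Ed d × Ed d → Ed d × Ed d) (id : Ed d → Ed d)) ∘
      (fun p : Ed d × (Ed d × Ed d) => ((p.1, p.2.1), p.2.2)) ∘
      (Prod.map (id : Ed d → Ed d) (Prod.swap : Ed d × Ed d → Ed d × Ed d)) ∘
      (Prod.map (id : Ed d → Ed d) (fun p : Ed d × Ed d => (ε⁻¹ • p.1, ε • p.2))) ∘
      (fun q : (Ed d × Ed d) × Ed d => (q.1.1, (q.1.2, q.2))) := by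
    funext q
    obtain ⟨⟨X, κ⟩, w⟩ := q
    simp only [Phi, Function.comp_apply, Prod.map_apply, id_eq, Prod.swap_prod_mk,
      Prod.mk.injEq]
    refine ⟨by module, trivial, by module⟩
  rw [key]
  exact ((((((((((mp_second mp_swap2).comp mp_assoc).comp
    (mp_first (mp_shear 1))).comp (mp_first mp_neg2)).comp
    (mp_first mp_swap2)).comp (mp_first (mp_shear 2⁻¹))).comp
    (mp_first mp_swap2)).comp mp_assoc_symm).comp
    (mp_second mp_swap2)).comp (mp_second (mp_scale hε))).comp mp_assoc

lemma Phi_homeo (ε : ℝ) (hε : ε ≠ 0) :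
    ∃ h : (Ed d × Ed d) × Ed d ≃ₜ Ed d × (Ed d × Ed d), ⇑h = Phi d ε := by
  refine ⟨Homeomorph.mk (Equiv.mk (Phi d ε)
      (fun p => (((2 : ℝ)⁻¹ • (p.1 + p.2.2), ε • p.2.1), ε⁻¹ • (p.1 - p.2.2)))
      (fun q => ?_) (fun p => ?_)) ?_ ?_, rfl⟩
  · obtain ⟨⟨X, κ⟩, w⟩ := q
    simp only [Phi]
    refine Prod.ext (Prod.ext ?_ ?_) ?_
    · show (2:ℝ)⁻¹ • ((X + (ε/2) • w) + (X - (ε/2) • w)) = X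
      module
    · show ε • ε⁻¹ • κ = κ
      rw [smul_inv_smul₀ hε]
    · show ε⁻¹ • ((X + (ε/2) • w) - (X - (ε/2) • w)) = w
      have : (X + (ε/2) • w) - (X - (ε/2) • w) = ε • w := by module
      rw [this, inv_smul_smul₀ hε]
  · obtain ⟨x, k, y⟩ := p
    simp only [Phi]
    refine Prod.ext ?_ (Prod.ext ?_ ?_)
    · show (2:ℝ)⁻¹ • (x + y) + (ε/2) • ε⁻¹ • (x - y) = x
      rw [smul_smul]
      have : ε / 2 * ε⁻¹ = (2:ℝ)⁻¹ := by field_simp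
      rw [this]; module
    · show ε⁻¹ • ε • k = k
      rw [inv_smul_smul₀ hε]
    · show (2:ℝ)⁻¹ • (x + y) - (ε/2) • ε⁻¹ • (x - y) = y
      rw [smul_smul]
      have : ε / 2 * ε⁻¹ = (2:ℝ)⁻¹ := by field_simp
      rw [this]; module
  · show Continuous (Phi d ε); unfold Phi; fun_prop
  · fun_prop



lemma schwartz_decay {V : Type*} [NormedAddCommGroup V] [NormedSpace ℝ V]
    (n : ℕ) (f : 𝓢(V, ℂ)) :
    ∃ C : ℝ, 0 ≤ C ∧ ∀ x, ‖f x‖ ≤ C * ((1 + ‖x‖) ^ n)⁻¹ := by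
  refine ⟨2 ^ n * (Finset.Iic (n, 0)).sup (fun m => SchwartzMap.seminorm ℝ m.1 m.2) f,
    by positivity, fun x => ?_⟩
  have h := SchwartzMap.one_add_le_sup_seminorm_apply (𝕜 := ℝ) (m := (n, 0))
    le_rfl le_rfl f x
  rw [norm_iteratedFDeriv_zero] at h
  have hpos : (0:ℝ) < (1 + ‖x‖) ^ n := by positivity
  have h' : (1 + ‖x‖) ^ n * ‖f x‖ ≤
      2 ^ n * (Finset.Iic (n, 0)).sup (fun m => SchwartzMap.seminorm ℝ m.1 m.2) f := h
  calc ‖f x‖ = ((1 + ‖x‖) ^ n * ‖f x‖) * ((1 + ‖x‖) ^ n)⁻¹ := by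
        field_simp
    _ ≤ (2 ^ n * (Finset.Iic (n, 0)).sup (fun m => SchwartzMap.seminorm ℝ m.1 m.2) f) *
        ((1 + ‖x‖) ^ n)⁻¹ := by gcongr

lemma integrable_decay (n : ℕ) (hn : d < n) :
    Integrable (fun x : Ed d => ((1 + ‖x‖) ^ n)⁻¹) volume := by
  have h := integrable_one_add_norm (E := Ed d) (μ := volume) (r := n)
    (by rw [finrank_euclideanSpace_fin]; exact_mod_cast hn)
  refine h.congr (Filter.Eventually.of_forall fun x => ?_)
  dsimp only
  rw [Real.rpow_neg (by positivity), Real.rpow_natCast]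

lemma integrable_decay_smul (n : ℕ) (hn : d < n) {ε : ℝ} (hε : ε ≠ 0) :
    Integrable (fun x : Ed d => ((1 + ‖ε • x‖) ^ n)⁻¹) volume :=
  (integrable_comp_smul_iff volume (fun x : Ed d => ((1 + ‖x‖) ^ n)⁻¹) hε).mpr
    (integrable_decay n hn)

lemma norm_exp_I_mul_real (r : ℝ) : ‖Complex.exp (Complex.I * (r : ℂ))‖ = 1 := by
  rw [mul_comm, Complex.norm_exp_ofReal_mul_I]

/-- per-`x` integrability of the inner double integral of the Weyl quantization. -/
lemma integrable_inner (ε : ℝ) (hε : ε ≠ 0)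
    (a : 𝓢(Ed d × Ed d, ℂ)) (φ : 𝓢(Ed d, ℂ)) (x : Ed d) :
    Integrable (fun p : Ed d × Ed d =>
      a ((2 : ℝ)⁻¹ • (x + p.2), ε • p.1) * φ p.2 *
        Complex.exp (Complex.I * ((inner ℝ (x - p.2) p.1 : ℝ) : ℂ))) volume := by
  obtain ⟨C, hC0, hC⟩ := schwartz_decay (d + 1) a
  have hb : Integrable (fun p : Ed d × Ed d =>
      (C * ((1 + ‖ε • p.1‖) ^ (d + 1))⁻¹) * ‖φ p.2‖) volume :=
    ((integrable_decay_smul (d + 1) d.lt_succ_self hε).const_mul C).mul_prod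
      φ.integrable.norm
  refine hb.mono' ?_ (Filter.Eventually.of_forall fun p => ?_)
  · apply Continuous.aestronglyMeasurable
    refine ((a.continuous.comp (by fun_prop)).mul (φ.continuous.comp continuous_snd)).mul
      (Complex.continuous_exp.comp ?_)
    exact continuous_const.mul (Complex.continuous_ofReal.comp
      ((continuous_const.sub continuous_snd).inner continuous_fst))
  · rw [norm_mul, norm_mul, norm_exp_I_mul_real, mul_one]
    have hmono : (1 + ‖ε • p.1‖) ^ (d + 1) ≤
        (1 + ‖((2 : ℝ)⁻¹ • (x + p.2), ε • p.1)‖) ^ (d + 1) := by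
      gcongr
      exact norm_snd_le ((2 : ℝ)⁻¹ • (x + p.2), ε • p.1)
    have h1 : ‖a ((2 : ℝ)⁻¹ • (x + p.2), ε • p.1)‖ ≤ C * ((1 + ‖ε • p.1‖) ^ (d + 1))⁻¹ :=
      (hC _).trans (mul_le_mul_of_nonneg_left
        (inv_anti₀ (by positivity) hmono) hC0)
    exact mul_le_mul_of_nonneg_right h1 (norm_nonneg _)

/-- The master integrand, as a function on `E × (E × E)`. -/
def Gfun (d : ℕ) (ε : ℝ) (a : Ed d × Ed d → ℂ) (φ : Ed d → ℂ)
    (z : Ed d × (Ed d × Ed d)) : ℂ :=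
  (starRingEnd ℂ) (φ z.1) *
    (a ((2 : ℝ)⁻¹ • (z.1 + z.2.2), ε • z.2.1) * φ z.2.2 *
      Complex.exp (Complex.I * ((inner ℝ (z.1 - z.2.2) z.2.1 : ℝ) : ℂ)))

/-- The Wigner-side integrand, as a function on `(E × E) × E`. -/
def Hfun (d : ℕ) (ε : ℝ) (a : Ed d × Ed d → ℂ) (φ : Ed d → ℂ)
    (q : (Ed d × Ed d) × Ed d) : ℂ :=
  a q.1 * (Complex.exp (Complex.I * ((inner ℝ q.1.2 q.2 : ℝ) : ℂ)) *
    φ (q.1.1 - (ε / 2) • q.2) * (starRingEnd ℂ) (φ (q.1.1 + (ε / 2) • q.2)))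

lemma integrable_G (ε : ℝ) (hε : ε ≠ 0)
    (a : 𝓢(Ed d × Ed d, ℂ)) (φ : 𝓢(Ed d, ℂ)) :
    Integrable (Gfun d ε ⇑a ⇑φ) volume := by
  obtain ⟨C, hC0, hC⟩ := schwartz_decay (d + 1) a
  have hb : Integrable (fun z : Ed d × (Ed d × Ed d) =>
      ‖φ z.1‖ * ((C * ((1 + ‖ε • z.2.1‖) ^ (d + 1))⁻¹) * ‖φ z.2.2‖)) volume := by
    rw [Measure.volume_eq_prod]
    exact φ.integrable.norm.mul_prod
      (((integrable_decay_smul (d + 1) d.lt_succ_self hε).const_mul C).mul_prod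
        φ.integrable.norm)
  refine hb.mono' ?_ (Filter.Eventually.of_forall fun z => ?_)
  · apply Continuous.aestronglyMeasurable
    unfold Gfun
    refine (Complex.continuous_conj.comp (φ.continuous.comp continuous_fst)).mul
      (((a.continuous.comp (by fun_prop)).mul
        (φ.continuous.comp (continuous_snd.comp continuous_snd))).mul
      (Complex.continuous_exp.comp (continuous_const.mul
        (Complex.continuous_ofReal.comp
          ((continuous_fst.sub (continuous_snd.comp continuous_snd)).inner
            (continuous_fst.comp continuous_snd))))))
  · unfold Gfun
    rw [norm_mul, norm_mul, norm_mul, norm_exp_I_mul_real, mul_one, RCLike.norm_conj]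
    have hmono : (1 + ‖ε • z.2.1‖) ^ (d + 1) ≤
        (1 + ‖((2 : ℝ)⁻¹ • (z.1 + z.2.2), ε • z.2.1)‖) ^ (d + 1) := by
      gcongr
      exact norm_snd_le ((2 : ℝ)⁻¹ • (z.1 + z.2.2), ε • z.2.1)
    have h1 : ‖a ((2 : ℝ)⁻¹ • (z.1 + z.2.2), ε • z.2.1)‖ ≤
        C * ((1 + ‖ε • z.2.1‖) ^ (d + 1))⁻¹ :=
      (hC _).trans (mul_le_mul_of_nonneg_left (inv_anti₀ (by positivity) hmono) hC0)
    have := mul_le_mul_of_nonneg_right h1 (norm_nonneg (φ z.2.2))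
    calc ‖φ z.1‖ * (‖a ((2 : ℝ)⁻¹ • (z.1 + z.2.2), ε • z.2.1)‖ * ‖φ z.2.2‖)
        ≤ ‖φ z.1‖ * ((C * ((1 + ‖ε • z.2.1‖) ^ (d + 1))⁻¹) * ‖φ z.2.2‖) := by
          gcongr
    _ = _ := rfl

lemma GPhi (ε : ℝ) (hε : ε ≠ 0) (a : Ed d × Ed d → ℂ) (φ : Ed d → ℂ)
    (q : (Ed d × Ed d) × Ed d) :
    Gfun d ε a φ (Phi d ε q) = Hfun d ε a φ q := by
  obtain ⟨⟨X, κ⟩, w⟩ := q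
  unfold Gfun Phi Hfun
  dsimp only
  have h1 : (2 : ℝ)⁻¹ • ((X + (ε / 2) • w) + (X - (ε / 2) • w)) = X := by module
  have h2 : ε • ε⁻¹ • κ = κ := smul_inv_smul₀ hε κ
  have h3 : (X + (ε / 2) • w) - (X - (ε / 2) • w) = ε • w := by module
  rw [h1, h2, h3]
  have h4 : (inner ℝ (ε • w) (ε⁻¹ • κ) : ℝ) = (inner ℝ κ w : ℝ) := by
    rw [real_inner_smul_left, real_inner_smul_right, ← mul_assoc,
      mul_inv_cancel₀ hε, one_mul, real_inner_comm]
  rw [h4]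
  ring


end WeylAux

open WeylAux

/-- The quantum expectation of a Weyl-quantized observable equals the phase-space
pairing of the symbol with the Wigner transform. -/
theorem weyl_expectation_eq_wigner_pairing (d : ℕ) (ε : ℝ) (hε : 0 < ε)
    (a : 𝓢(EuclideanSpace ℝ (Fin d) × EuclideanSpace ℝ (Fin d), ℂ))
    (φ : 𝓢(EuclideanSpace ℝ (Fin d), ℂ)) :
    ∫ x : EuclideanSpace ℝ (Fin d),
        (starRingEnd ℂ) (φ x) * weylQuant d ε (⇑a) (⇑φ) x
      = ∫ z : EuclideanSpace ℝ (Fin d) × EuclideanSpace ℝ (Fin d),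
          a z * wigner d ε (⇑φ) (⇑φ) z.1 z.2 := by
  have hεne : ε ≠ 0 := hε.ne'
  set c : ℂ := ((((2 * Real.pi) ^ d)⁻¹ : ℝ) : ℂ) with hc
  obtain ⟨Φh, hΦh⟩ := Phi_homeo (d := d) ε hεne
  have hemb : MeasurableEmbedding (Phi d ε) := hΦh ▸ Φh.measurableEmbedding
  have hmp := mp_Phi (d := d) ε hεne
  have hG := integrable_G (d := d) ε hεne a φ
  have hH : Integrable (Hfun d ε ⇑a ⇑φ) volume := by
    have h := (hmp.integrable_comp_emb hemb (g := Gfun d ε ⇑a ⇑φ)).mpr hG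
    have heq : Gfun d ε ⇑a ⇑φ ∘ Phi d ε = Hfun d ε ⇑a ⇑φ :=
      funext fun q => GPhi ε hεne ⇑a ⇑φ q
    rwa [heq] at h
  calc
    ∫ x, (starRingEnd ℂ) (φ x) * weylQuant d ε (⇑a) (⇑φ) x
      = ∫ x : Ed d, c * ∫ p : Ed d × Ed d, Gfun d ε ⇑a ⇑φ (x, p) := by
        refine integral_congr_ae (Filter.Eventually.of_forall fun x => ?_)
        dsimp only
        unfold weylQuant
        rw [show (∫ k : Ed d, ∫ y : Ed d,
            a ((2 : ℝ)⁻¹ • (x + y), ε • k) * φ y *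
              Complex.exp (Complex.I * ((inner ℝ (x - y) k : ℝ) : ℂ)))
          = ∫ p : Ed d × Ed d,
            a ((2 : ℝ)⁻¹ • (x + p.2), ε • p.1) * φ p.2 *
              Complex.exp (Complex.I * ((inner ℝ (x - p.2) p.1 : ℝ) : ℂ))
          from (integral_prod _ (integrable_inner ε hεne a φ x)).symm]
        have hpull : (∫ p : Ed d × Ed d, Gfun d ε ⇑a ⇑φ (x, p))
          = (starRingEnd ℂ) (φ x) * ∫ p : Ed d × Ed d,
              a ((2 : ℝ)⁻¹ • (x + p.2), ε • p.1) * φ p.2 *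
                Complex.exp (Complex.I * ((inner ℝ (x - p.2) p.1 : ℝ) : ℂ)) := by
          simp only [Gfun]
          exact integral_const_mul _ _
        rw [hpull]
        ring
    _ = c * ∫ z : Ed d × (Ed d × Ed d), Gfun d ε ⇑a ⇑φ z := by
        rw [integral_const_mul]
        congr 1
        exact integral_integral (f := fun x p => Gfun d ε ⇑a ⇑φ (x, p)) hG
    _ = c * ∫ q : (Ed d × Ed d) × Ed d, Hfun d ε ⇑a ⇑φ q := by
        rw [← hmp.integral_comp hemb (Gfun d ε ⇑a ⇑φ)]
        congr 1
        exact integral_congr_ae (Filter.Eventually.of_forall fun q =>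
          GPhi ε hεne ⇑a ⇑φ q)
    _ = c * ∫ z : Ed d × Ed d, ∫ w : Ed d, Hfun d ε ⇑a ⇑φ (z, w) := by
        congr 1
        exact integral_prod _ hH
    _ = ∫ z : Ed d × Ed d, a z * wigner d ε (⇑φ) (⇑φ) z.1 z.2 := by
        rw [← integral_const_mul]
        refine integral_congr_ae (Filter.Eventually.of_forall fun z => ?_)
        dsimp only
        unfold wigner Hfun
        rw [show (∫ w : Ed d, a z * (Complex.exp (Complex.I * ((inner ℝ z.2 w : ℝ) : ℂ)) *
              φ (z.1 - (ε / 2) • w) * (starRingEnd ℂ) (φ (z.1 + (ε / 2) • w))))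
          = a z * ∫ w : Ed d, Complex.exp (Complex.I * ((inner ℝ z.2 w : ℝ) : ℂ)) *
              φ (z.1 - (ε / 2) • w) * (starRingEnd ℂ) (φ (z.1 + (ε / 2) • w))
          from integral_const_mul _ _]
        ring


end
end

section
/- (Fredholm identity for the linearized Schrödinger inverse problem.) Let ε > 0, T > 0, and let V_b, Ṽ : ℝ^d → ℝ be bounded and continuous. Let φ_b, φ̃, ψ : [0,T] × ℝ^d → ℂ have each time slice Schwartz in x with Schwartz seminorms bounded uniformly on [0,T], be differentiable in t as curves into L²(ℝ^d) with L²-derivative matching the respective equations, and satisfy classically: iε ∂_tφ_b = −(ε²/2)Δ_xφ_b + V_b φ_b; iε ∂_tφ̃ = −(ε²/2)Δ_xφ̃ + V_b φ̃ + Ṽ φ_b with φ̃(0,·) = 0; and iε ∂_tψ = −(ε²/2)Δ_xψ + V_b ψ. Then ∫_{ℝ^d} φ̃(T,x) conj(ψ(T,x)) dx = ∫_{ℝ^d} Ṽ(x) R_S(x) dx, where the Schrödinger representative is R_S(x) = (1/(iε)) ∫_0^T φ_b(t,x) conj(ψ(t,x)) dt. -/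
open MeasureTheory Complex
open scoped SchwartzMap

noncomputable section

/-- The spatial Laplacian `Δf(x) = ∑ⱼ ∂²f/∂xⱼ²` of a function on `ℝ^d`. -/
def lap (d : ℕ) (f : EuclideanSpace ℝ (Fin d) → ℂ) (x : EuclideanSpace ℝ (Fin d)) : ℂ :=
  ∑ j : Fin d, fderiv ℝ (fun y => fderiv ℝ f y (EuclideanSpace.single j (1 : ℝ))) x
    (EuclideanSpace.single j (1 : ℝ))


section Aux

open SchwartzMap

variable {d : ℕ}

/-- Complex conjugation of a Schwartz function, as a Schwartz function. -/
def conjS (f : 𝓢(EuclideanSpace ℝ (Fin d), ℂ)) : 𝓢(EuclideanSpace ℝ (Fin d), ℂ) where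
  toFun := fun x => (starRingEnd ℂ) (f x)
  smooth' := by
    have : (fun x => (starRingEnd ℂ) (f x)) = (⇑Complex.conjCLE) ∘ ⇑f := rfl
    rw [this]
    exact Complex.conjCLE.contDiff.comp (f.smooth ⊤)
  decay' := by
    intro k n
    obtain ⟨C, hC⟩ := f.decay' k n
    refine ⟨C, fun x => ?_⟩
    have h1 : (fun x => (starRingEnd ℂ) (f x)) = (⇑Complex.conjLIE) ∘ ⇑f := rfl
    have h2 : ‖iteratedFDeriv ℝ n ((⇑Complex.conjLIE) ∘ ⇑f) x‖ = ‖iteratedFDeriv ℝ n (⇑f) x‖ :=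
      Complex.conjLIE.norm_iteratedFDeriv_comp_left (⇑f) x n
    rw [h1, h2]
    exact hC x

@[simp] lemma conjS_apply (f : 𝓢(EuclideanSpace ℝ (Fin d), ℂ)) (x : EuclideanSpace ℝ (Fin d)) :
    conjS f x = (starRingEnd ℂ) (f x) := rfl

/-- Partial derivative along `v` as a continuous linear map on Schwartz space. -/
def pderivCLM (𝕜 : Type) (v : EuclideanSpace ℝ (Fin d)) :
    𝓢(EuclideanSpace ℝ (Fin d), ℂ) →L[ℝ] 𝓢(EuclideanSpace ℝ (Fin d), ℂ) :=
  LineDeriv.lineDerivOpCLM ℝ 𝓢(EuclideanSpace ℝ (Fin d), ℂ) v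

lemma pderivCLM_apply (𝕜 : Type) (v : EuclideanSpace ℝ (Fin d))
    (f : 𝓢(EuclideanSpace ℝ (Fin d), ℂ)) (x : EuclideanSpace ℝ (Fin d)) :
    pderivCLM 𝕜 v f x = fderiv ℝ (⇑f) x v := rfl

lemma pderivCLM_conjS (v : EuclideanSpace ℝ (Fin d)) (f : 𝓢(EuclideanSpace ℝ (Fin d), ℂ)) :
    pderivCLM ℝ v (conjS f) = conjS (pderivCLM ℝ v f) := by
  ext x
  simp only [pderivCLM_apply, conjS_apply]
  have hf : HasFDerivAt (⇑f) (fderiv ℝ (⇑f) x) x := f.differentiableAt.hasFDerivAt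
  have hL : HasFDerivAt (fun z : ℂ => (starRingEnd ℂ) z)
      (Complex.conjCLE.toContinuousLinearMap) (f x) :=
    Complex.conjCLE.toContinuousLinearMap.hasFDerivAt
  have hcomp : HasFDerivAt (fun y => (starRingEnd ℂ) (f y))
      (Complex.conjCLE.toContinuousLinearMap.comp (fderiv ℝ (⇑f) x)) x := hL.comp x hf
  have h3 : fderiv ℝ (fun y => (starRingEnd ℂ) (f y)) x
      = Complex.conjCLE.toContinuousLinearMap.comp (fderiv ℝ (⇑f) x) := hcomp.fderiv
  have hcoe : ⇑(conjS f) = fun y => (starRingEnd ℂ) (f y) := rfl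
  rw [hcoe, h3]
  rfl

/-- The Laplacian as a map of Schwartz functions. -/
def lapS (d : ℕ) (f : 𝓢(EuclideanSpace ℝ (Fin d), ℂ)) : 𝓢(EuclideanSpace ℝ (Fin d), ℂ) :=
  ∑ j : Fin d, pderivCLM ℝ (EuclideanSpace.single j (1 : ℝ))
    (pderivCLM ℝ (EuclideanSpace.single j (1 : ℝ)) f)

lemma pderiv_coe (v : EuclideanSpace ℝ (Fin d)) (f : 𝓢(EuclideanSpace ℝ (Fin d), ℂ)) :
    ⇑(pderivCLM ℝ v f) = fun y => fderiv ℝ (⇑f) y v :=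
  funext fun y => pderivCLM_apply ℝ v f y

lemma lapS_apply (f : 𝓢(EuclideanSpace ℝ (Fin d), ℂ)) (x : EuclideanSpace ℝ (Fin d)) :
    lapS d f x = lap d (⇑f) x := by
  have hsum : ∀ (s : Finset (Fin d))
      (F : Fin d → 𝓢(EuclideanSpace ℝ (Fin d), ℂ)),
      (∑ j ∈ s, F j) x = ∑ j ∈ s, F j x := fun s F => by
    rw [SchwartzMap.sum_apply]
  rw [lapS, hsum]
  unfold lap
  refine Finset.sum_congr rfl fun j _ => ?_
  rw [pderivCLM_apply, pderiv_coe]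

lemma schwartz_sum_apply {ι : Type*} (s : Finset ι)
    (F : ι → 𝓢(EuclideanSpace ℝ (Fin d), ℂ)) (x : EuclideanSpace ℝ (Fin d)) :
    (∑ j ∈ s, F j) x = ∑ j ∈ s, F j x := by
  rw [SchwartzMap.sum_apply]

lemma lap_conjS (f : 𝓢(EuclideanSpace ℝ (Fin d), ℂ)) (x : EuclideanSpace ℝ (Fin d)) :
    lap d (⇑(conjS f)) x = (starRingEnd ℂ) (lap d (⇑f) x) := by
  rw [← lapS_apply, ← lapS_apply]
  unfold lapS
  rw [schwartz_sum_apply, schwartz_sum_apply, map_sum]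
  refine Finset.sum_congr rfl fun j _ => ?_
  rw [pderivCLM_conjS, pderivCLM_conjS]
  rfl

lemma integrable_mulS (f g : 𝓢(EuclideanSpace ℝ (Fin d), ℂ)) :
    Integrable (fun x => f x * g x) (volume : Measure (EuclideanSpace ℝ (Fin d))) :=
  (g.integrable (μ := volume)).bdd_mul f.continuous.aestronglyMeasurable
    (Filter.Eventually.of_forall fun x => norm_le_seminorm ℝ f x)

lemma integrable_VmulS (V : EuclideanSpace ℝ (Fin d) → ℝ) (hVb : ∃ C : ℝ, ∀ x, |V x| ≤ C)
    (hVc : Continuous V) (f g : 𝓢(EuclideanSpace ℝ (Fin d), ℂ)) :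
    Integrable (fun x => ((V x : ℝ) : ℂ) * (f x * g x))
      (volume : Measure (EuclideanSpace ℝ (Fin d))) := by
  obtain ⟨C, hC⟩ := hVb
  exact (integrable_mulS f g).bdd_mul
    ((Complex.continuous_ofReal.comp hVc).aestronglyMeasurable)
    (Filter.Eventually.of_forall fun x => by simpa [Complex.norm_real] using hC x)

/-- Self-adjointness of the Laplacian on Schwartz functions. -/
lemma integral_mul_lap (f g : 𝓢(EuclideanSpace ℝ (Fin d), ℂ)) :
    ∫ x, f x * lap d (⇑g) x = ∫ x, lap d (⇑f) x * g x := by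
  have key : ∀ (f g : 𝓢(EuclideanSpace ℝ (Fin d), ℂ)) (j : Fin d),
      ∫ x, f x * fderiv ℝ (fun y => fderiv ℝ (⇑g) y (EuclideanSpace.single j (1 : ℝ))) x
          (EuclideanSpace.single j (1 : ℝ))
        = - ∫ x, (pderivCLM ℝ (EuclideanSpace.single j (1 : ℝ)) f) x *
            (pderivCLM ℝ (EuclideanSpace.single j (1 : ℝ)) g) x := by
    intro f g j
    set v := EuclideanSpace.single j (1 : ℝ) with hv
    have hd1 := integrable_mulS (pderivCLM ℝ v f) (pderivCLM ℝ v g)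
    have hd2 := integrable_mulS f (pderivCLM ℝ v (pderivCLM ℝ v g))
    have hd3 := integrable_mulS f (pderivCLM ℝ v g)
    have h := integral_mul_fderiv_eq_neg_fderiv_mul_of_integrable
      (μ := (volume : Measure (EuclideanSpace ℝ (Fin d))))
      (f := ⇑f) (g := ⇑(pderivCLM ℝ v g)) (v := v)
      (by simp only [pderiv_coe]; simpa [pderiv_coe] using hd1)
      (by simpa [pderiv_coe] using hd2)
      (by simpa [pderiv_coe] using hd3)
      (fun x _ => f.differentiableAt) (fun x _ => (pderivCLM ℝ v g).differentiableAt)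
    simp only [pderiv_coe] at h ⊢
    exact h
  have hIf : ∀ (f g : 𝓢(EuclideanSpace ℝ (Fin d), ℂ)) (j : Fin d),
      Integrable (fun x => f x * fderiv ℝ
        (fun y => fderiv ℝ (⇑g) y (EuclideanSpace.single j (1 : ℝ))) x
        (EuclideanSpace.single j (1 : ℝ))) (volume : Measure (EuclideanSpace ℝ (Fin d))) :=
    fun f g j => by
      simpa [pderiv_coe] using integrable_mulS f
        (pderivCLM ℝ (EuclideanSpace.single j (1 : ℝ))
          (pderivCLM ℝ (EuclideanSpace.single j (1 : ℝ)) g))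
  have hL : (fun x => f x * lap d (⇑g) x) = fun x => ∑ j : Fin d,
      f x * fderiv ℝ (fun y => fderiv ℝ (⇑g) y (EuclideanSpace.single j (1 : ℝ))) x
        (EuclideanSpace.single j (1 : ℝ)) :=
    funext fun x => by rw [lap, Finset.mul_sum]
  have hR : (fun x => lap d (⇑f) x * g x) = fun x => ∑ j : Fin d,
      fderiv ℝ (fun y => fderiv ℝ (⇑f) y (EuclideanSpace.single j (1 : ℝ))) x
        (EuclideanSpace.single j (1 : ℝ)) * g x :=
    funext fun x => by rw [lap, Finset.sum_mul]
  rw [hL, hR, integral_finset_sum _ (fun j _ => hIf f g j),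
    integral_finset_sum _ (fun j _ => by
      have := hIf g f j
      exact this.congr (Filter.Eventually.of_forall fun x => mul_comm _ _))]
  refine Finset.sum_congr rfl fun j _ => ?_
  rw [key f g j]
  have h2 : ∫ x, fderiv ℝ (fun y => fderiv ℝ (⇑f) y (EuclideanSpace.single j (1 : ℝ))) x
      (EuclideanSpace.single j (1 : ℝ)) * g x
      = ∫ x, g x * fderiv ℝ (fun y => fderiv ℝ (⇑f) y (EuclideanSpace.single j (1 : ℝ))) x
        (EuclideanSpace.single j (1 : ℝ)) :=
    integral_congr_ae (Filter.Eventually.of_forall fun x => mul_comm _ _)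
  rw [h2, key g f j]
  congr 1
  exact integral_congr_ae (Filter.Eventually.of_forall fun x => mul_comm _ _)

lemma integral_conj_lap (f g : 𝓢(EuclideanSpace ℝ (Fin d), ℂ)) :
    ∫ x, (starRingEnd ℂ) (f x) * lap d (⇑g) x
      = ∫ x, (starRingEnd ℂ) (lap d (⇑f) x) * g x := by
  have h := integral_mul_lap (conjS f) g
  simp only [conjS_apply] at h
  rw [h]
  exact integral_congr_ae (Filter.Eventually.of_forall fun x => by simp only [lap_conjS])

lemma decay_boundS (f : 𝓢(EuclideanSpace ℝ (Fin d), ℂ)) (x : EuclideanSpace ℝ (Fin d)) :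
    ‖f x‖ ≤ (2 : ℝ) ^ (d + 1) *
      ((Finset.Iic ((d + 1, 0) : ℕ × ℕ)).sup (fun m => SchwartzMap.seminorm ℝ m.1 m.2) f) *
      ((1 + ‖x‖) ^ (d + 1))⁻¹ := by
  have h := SchwartzMap.one_add_le_sup_seminorm_apply (𝕜 := ℝ) (m := ((d + 1 : ℕ), 0))
    (k := d + 1) (n := 0) le_rfl le_rfl f x
  rw [norm_iteratedFDeriv_zero] at h
  have hpos : (0 : ℝ) < (1 + ‖x‖) ^ (d + 1) := by positivity
  have h2 : ‖f x‖ * (1 + ‖x‖) ^ (d + 1) ≤ (2 : ℝ) ^ (d + 1) *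
      ((Finset.Iic ((d + 1, 0) : ℕ × ℕ)).sup (fun m => SchwartzMap.seminorm ℝ m.1 m.2) f) := by
    rw [mul_comm]; exact h
  calc ‖f x‖ = ‖f x‖ * (1 + ‖x‖) ^ (d + 1) * ((1 + ‖x‖) ^ (d + 1))⁻¹ := by
        field_simp
    _ ≤ (2 : ℝ) ^ (d + 1) *
        ((Finset.Iic ((d + 1, 0) : ℕ × ℕ)).sup (fun m => SchwartzMap.seminorm ℝ m.1 m.2) f) *
        ((1 + ‖x‖) ^ (d + 1))⁻¹ :=
      mul_le_mul_of_nonneg_right h2 (inv_nonneg.2 hpos.le)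

lemma integrable_decay (d : ℕ) :
    Integrable (fun x : EuclideanSpace ℝ (Fin d) => ((1 + ‖x‖) ^ (d + 1))⁻¹)
      (volume : Measure (EuclideanSpace ℝ (Fin d))) := by
  have hr : ((Module.finrank ℝ (EuclideanSpace ℝ (Fin d)) : ℝ)) < (d : ℝ) + 1 := by
    rw [finrank_euclideanSpace, Fintype.card_fin]
    exact lt_add_one _
  have h := integrable_one_add_norm (E := EuclideanSpace ℝ (Fin d))
    (μ := volume) (r := ((d : ℝ) + 1)) hr
  refine h.congr (Filter.Eventually.of_forall fun x => ?_)
  have h1 : (0 : ℝ) ≤ 1 + ‖x‖ := by positivity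
  show (1 + ‖x‖) ^ (-((d : ℝ) + 1)) = ((1 + ‖x‖) ^ (d + 1))⁻¹
  rw [show -((d : ℝ) + 1) = -(((d + 1 : ℕ)) : ℝ) by push_cast; ring,
    Real.rpow_neg h1, Real.rpow_natCast]

lemma uniform_decay {T : ℝ} (f : ℝ → 𝓢(EuclideanSpace ℝ (Fin d), ℂ))
    (hB : ∀ n m : ℕ, ∃ C : ℝ, ∀ t ∈ Set.Icc (0 : ℝ) T, SchwartzMap.seminorm ℝ n m (f t) ≤ C) :
    ∃ C : ℝ, 0 ≤ C ∧ ∀ t ∈ Set.Icc (0 : ℝ) T, ∀ x, ‖f t x‖ ≤ C * ((1 + ‖x‖) ^ (d + 1))⁻¹ := by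
  choose c hc using hB
  set S : Finset (ℕ × ℕ) := Finset.Iic ((d + 1, 0) : ℕ × ℕ) with hS
  set M : ℝ := ∑ p ∈ S, max (c p.1 p.2) 0 with hM
  have hM0 : 0 ≤ M := Finset.sum_nonneg fun p _ => le_max_right _ _
  have hsup : ∀ t ∈ Set.Icc (0 : ℝ) T,
      (S.sup (fun m => SchwartzMap.seminorm ℝ m.1 m.2)) (f t) ≤ M := by
    intro t ht
    refine Seminorm.finset_sup_apply_le hM0 fun p hp => ?_
    calc SchwartzMap.seminorm ℝ p.1 p.2 (f t) ≤ c p.1 p.2 := hc p.1 p.2 t ht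
      _ ≤ max (c p.1 p.2) 0 := le_max_left _ _
      _ ≤ M := Finset.single_le_sum (fun q _ => le_max_right (c q.1 q.2) 0) hp
  refine ⟨(2 : ℝ) ^ (d + 1) * M, by positivity, fun t ht x => ?_⟩
  calc ‖f t x‖ ≤ (2 : ℝ) ^ (d + 1) *
        ((Finset.Iic ((d + 1, 0) : ℕ × ℕ)).sup (fun m => SchwartzMap.seminorm ℝ m.1 m.2) (f t)) *
        ((1 + ‖x‖) ^ (d + 1))⁻¹ := decay_boundS (f t) x
    _ ≤ (2 : ℝ) ^ (d + 1) * M * ((1 + ‖x‖) ^ (d + 1))⁻¹ := by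
        have hinv : (0 : ℝ) ≤ ((1 + ‖x‖) ^ (d + 1))⁻¹ := by positivity
        exact mul_le_mul_of_nonneg_right
          (mul_le_mul_of_nonneg_left (hsup t ht) (by positivity)) hinv

lemma inner_toLp_eq {f g : EuclideanSpace ℝ (Fin d) → ℂ}
    (hf : MemLp f 2 (volume : Measure (EuclideanSpace ℝ (Fin d))))
    (hg : MemLp g 2 (volume : Measure (EuclideanSpace ℝ (Fin d)))) :
    (inner ℂ (hf.toLp) (hg.toLp) : ℂ) = ∫ x, (starRingEnd ℂ) (f x) * g x := by
  rw [MeasureTheory.L2.inner_def]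
  apply integral_congr_ae
  filter_upwards [hf.coeFn_toLp, hg.coeFn_toLp] with x h1 h2
  simp [h1, h2, RCLike.inner_apply, mul_comm]


lemma key_value {ε : ℝ} (hε : ε ≠ 0) (Vb Vt : EuclideanSpace ℝ (Fin d) → ℝ)
    (hVbb : ∃ C : ℝ, ∀ x, |Vb x| ≤ C) (hVbc : Continuous Vb)
    (hVtb : ∃ C : ℝ, ∀ x, |Vt x| ≤ C) (hVtc : Continuous Vt)
    (f g h : 𝓢(EuclideanSpace ℝ (Fin d), ℂ)) :
    (∫ x, (starRingEnd ℂ) (f x) *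
        ((Complex.I * ε / 2) * lap d (⇑g) x - (Complex.I / ε) * Vb x * g x
          - (Complex.I / ε) * Vt x * h x))
      + (∫ x, (starRingEnd ℂ)
          ((Complex.I * ε / 2) * lap d (⇑f) x - (Complex.I / ε) * Vb x * f x) * g x)
      = (1 / (Complex.I * ε)) * ∫ x, ((Vt x : ℝ) : ℂ) * (h x * (starRingEnd ℂ) (f x)) := by
  have iA : Integrable (fun x => (starRingEnd ℂ) (lap d (⇑f) x) * g x)
      (volume : Measure (EuclideanSpace ℝ (Fin d))) := by
    have := integrable_mulS (conjS (lapS d f)) g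
    simpa [conjS_apply, lapS_apply] using this
  have iA2 : Integrable (fun x => (starRingEnd ℂ) (f x) * lap d (⇑g) x)
      (volume : Measure (EuclideanSpace ℝ (Fin d))) := by
    have := integrable_mulS (conjS f) (lapS d g)
    simpa [conjS_apply, lapS_apply] using this
  have iB : Integrable (fun x => ((Vb x : ℝ) : ℂ) * ((starRingEnd ℂ) (f x) * g x))
      (volume : Measure (EuclideanSpace ℝ (Fin d))) := by
    have := integrable_VmulS Vb hVbb hVbc (conjS f) g
    simpa [conjS_apply] using this
  have iC : Integrable (fun x => ((Vt x : ℝ) : ℂ) * ((starRingEnd ℂ) (f x) * h x))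
      (volume : Measure (EuclideanSpace ℝ (Fin d))) := by
    have := integrable_VmulS Vt hVtb hVtc (conjS f) h
    simpa [conjS_apply] using this
  set A : ℂ := ∫ x, (starRingEnd ℂ) (lap d (⇑f) x) * g x with hA
  set A2 : ℂ := ∫ x, (starRingEnd ℂ) (f x) * lap d (⇑g) x with hA2
  set B : ℂ := ∫ x, ((Vb x : ℝ) : ℂ) * ((starRingEnd ℂ) (f x) * g x) with hB
  set C : ℂ := ∫ x, ((Vt x : ℝ) : ℂ) * ((starRingEnd ℂ) (f x) * h x) with hC
  have hAeq : A2 = A := integral_conj_lap f g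
  have h1 : (∫ x, (starRingEnd ℂ) (f x) *
      ((Complex.I * ε / 2) * lap d (⇑g) x - (Complex.I / ε) * Vb x * g x
        - (Complex.I / ε) * Vt x * h x))
      = (Complex.I * ε / 2) * A2 - (Complex.I / ε) * B - (Complex.I / ε) * C := by
    have e1 : (fun x => (starRingEnd ℂ) (f x) *
        ((Complex.I * ε / 2) * lap d (⇑g) x - (Complex.I / ε) * Vb x * g x
          - (Complex.I / ε) * Vt x * h x))
        = fun x => (Complex.I * ε / 2) * ((starRingEnd ℂ) (f x) * lap d (⇑g) x)
            + ((-(Complex.I / ε)) * (((Vb x : ℝ) : ℂ) * ((starRingEnd ℂ) (f x) * g x))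
            + (-(Complex.I / ε)) * (((Vt x : ℝ) : ℂ) * ((starRingEnd ℂ) (f x) * h x))) :=
      funext fun x => by ring
    have iBC : Integrable (fun x =>
        (-(Complex.I / ε)) * (((Vb x : ℝ) : ℂ) * ((starRingEnd ℂ) (f x) * g x))
        + (-(Complex.I / ε)) * (((Vt x : ℝ) : ℂ) * ((starRingEnd ℂ) (f x) * h x)))
        (volume : Measure (EuclideanSpace ℝ (Fin d))) :=
      (iB.const_mul _).add (iC.const_mul _)
    rw [e1, integral_add (iA2.const_mul _) iBC]
    beta_reduce
    rw [integral_add (iB.const_mul _) (iC.const_mul _),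
      integral_const_mul, integral_const_mul, integral_const_mul]
    ring
  have h2 : (∫ x, (starRingEnd ℂ)
        ((Complex.I * ε / 2) * lap d (⇑f) x - (Complex.I / ε) * Vb x * f x) * g x)
      = -(Complex.I * ε / 2) * A + (Complex.I / ε) * B := by
    have e2 : (fun x => (starRingEnd ℂ)
        ((Complex.I * ε / 2) * lap d (⇑f) x - (Complex.I / ε) * Vb x * f x) * g x)
        = fun x => (-(Complex.I * ε / 2) * ((starRingEnd ℂ) (lap d (⇑f) x) * g x)
            + (Complex.I / ε) * (((Vb x : ℝ) : ℂ) * ((starRingEnd ℂ) (f x) * g x))) := by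
      funext x
      simp only [map_sub, map_mul, map_div₀, Complex.conj_I, Complex.conj_ofReal, map_ofNat]
      ring
    rw [e2, integral_add (iA.const_mul _) (iB.const_mul _),
      integral_const_mul, integral_const_mul]
  have hC' : (∫ x, ((Vt x : ℝ) : ℂ) * (h x * (starRingEnd ℂ) (f x))) = C := by
    rw [hC]
    exact integral_congr_ae (Filter.Eventually.of_forall fun x => by ring)
  have hIe : (1 : ℂ) / (Complex.I * ε) = -(Complex.I / ε) := by
    rw [one_div, mul_inv, Complex.inv_I]
    ring
  rw [h1, h2, hAeq, hC', hIe]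
  ring

end Aux

/-- Fredholm identity for the linearized Schrödinger inverse problem:
`∫ φ̃(T) conj(ψ(T)) dx = ∫ Ṽ(x) R_S(x) dx` with the Schrödinger representative
`R_S(x) = (1/(iε)) ∫_0^T φ_b conj(ψ) dt`. -/
theorem schrodinger_fredholm_identity (d : ℕ) (ε T : ℝ) (hε : 0 < ε) (hT : 0 < T)
    (Vb Vt : EuclideanSpace ℝ (Fin d) → ℝ)
    (hVbb : ∃ C : ℝ, ∀ x, |Vb x| ≤ C) (hVbc : Continuous Vb)
    (hVtb : ∃ C : ℝ, ∀ x, |Vt x| ≤ C) (hVtc : Continuous Vt)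
    (φb φt ψ : ℝ → 𝓢(EuclideanSpace ℝ (Fin d), ℂ))
    -- `φ_b` solves the background Schrödinger equation classically:
    (hφb : ∀ t ∈ Set.Icc (0 : ℝ) T, ∀ x : EuclideanSpace ℝ (Fin d),
      DifferentiableAt ℝ (fun s => φb s x) t ∧
      Complex.I * (ε : ℂ) * deriv (fun s => φb s x) t
        = -((ε ^ 2 / 2 : ℝ) : ℂ) * lap d (⇑(φb t)) x + ((Vb x : ℝ) : ℂ) * φb t x)
    -- `φ̃` solves the linearized Schrödinger equation with source `Ṽ φ_b`:
    (hφt : ∀ t ∈ Set.Icc (0 : ℝ) T, ∀ x : EuclideanSpace ℝ (Fin d),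
      DifferentiableAt ℝ (fun s => φt s x) t ∧
      Complex.I * (ε : ℂ) * deriv (fun s => φt s x) t
        = -((ε ^ 2 / 2 : ℝ) : ℂ) * lap d (⇑(φt t)) x + ((Vb x : ℝ) : ℂ) * φt t x
          + ((Vt x : ℝ) : ℂ) * φb t x)
    (hφt0 : φt 0 = 0)
    -- `ψ` solves the adjoint (background) Schrödinger equation classically:
    (hψ : ∀ t ∈ Set.Icc (0 : ℝ) T, ∀ x : EuclideanSpace ℝ (Fin d),
      DifferentiableAt ℝ (fun s => ψ s x) t ∧
      Complex.I * (ε : ℂ) * deriv (fun s => ψ s x) t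
        = -((ε ^ 2 / 2 : ℝ) : ℂ) * lap d (⇑(ψ t)) x + ((Vb x : ℝ) : ℂ) * ψ t x)
    -- Schwartz seminorms of all time slices are bounded uniformly on `[0,T]`:
    (hφbB : ∀ n m : ℕ, ∃ C : ℝ, ∀ t ∈ Set.Icc (0 : ℝ) T,
      SchwartzMap.seminorm ℝ n m (φb t) ≤ C)
    (hφtB : ∀ n m : ℕ, ∃ C : ℝ, ∀ t ∈ Set.Icc (0 : ℝ) T,
      SchwartzMap.seminorm ℝ n m (φt t) ≤ C)
    (hψB : ∀ n m : ℕ, ∃ C : ℝ, ∀ t ∈ Set.Icc (0 : ℝ) T,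
      SchwartzMap.seminorm ℝ n m (ψ t) ≤ C)
    -- the three curves are differentiable in `t` as curves into `L²(ℝ^d)`,
    -- with `L²`-derivative matching the respective equations:
    (hφbM : ∀ t : ℝ, MemLp (⇑(φb t)) 2 (volume : Measure (EuclideanSpace ℝ (Fin d))))
    (hφtM : ∀ t : ℝ, MemLp (⇑(φt t)) 2 (volume : Measure (EuclideanSpace ℝ (Fin d))))
    (hψM : ∀ t : ℝ, MemLp (⇑(ψ t)) 2 (volume : Measure (EuclideanSpace ℝ (Fin d))))
    (hφbD : ∀ t : ℝ, MemLp
      (fun x => (Complex.I * ε / 2) * lap d (⇑(φb t)) x - (Complex.I / ε) * Vb x * φb t x)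
      2 (volume : Measure (EuclideanSpace ℝ (Fin d))))
    (hφtD : ∀ t : ℝ, MemLp
      (fun x => (Complex.I * ε / 2) * lap d (⇑(φt t)) x - (Complex.I / ε) * Vb x * φt t x
        - (Complex.I / ε) * Vt x * φb t x)
      2 (volume : Measure (EuclideanSpace ℝ (Fin d))))
    (hψD : ∀ t : ℝ, MemLp
      (fun x => (Complex.I * ε / 2) * lap d (⇑(ψ t)) x - (Complex.I / ε) * Vb x * ψ t x)
      2 (volume : Measure (EuclideanSpace ℝ (Fin d))))
    (hφbL2 : ∀ t ∈ Set.Icc (0 : ℝ) T,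
      HasDerivAt (fun s => (hφbM s).toLp) ((hφbD t).toLp) t)
    (hφtL2 : ∀ t ∈ Set.Icc (0 : ℝ) T,
      HasDerivAt (fun s => (hφtM s).toLp) ((hφtD t).toLp) t)
    (hψL2 : ∀ t ∈ Set.Icc (0 : ℝ) T,
      HasDerivAt (fun s => (hψM s).toLp) ((hψD t).toLp) t) :
    ∫ x : EuclideanSpace ℝ (Fin d), φt T x * (starRingEnd ℂ) (ψ T x)
      = ∫ x : EuclideanSpace ℝ (Fin d), ((Vt x : ℝ) : ℂ) *
          ((1 / (Complex.I * ε)) * ∫ t in (0 : ℝ)..T, φb t x * (starRingEnd ℂ) (ψ t x)) := by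
  classical
  have hT0 : (0 : ℝ) ≤ T := hT.le
  have hεne : (ε : ℝ) ≠ 0 := hε.ne'
  -- clamp to [0, T]
  set cl : ℝ → ℝ := fun t => max 0 (min t T) with hcldef
  have hclcont : Continuous cl := continuous_const.max (continuous_id.min continuous_const)
  have hclmem : ∀ t, cl t ∈ Set.Icc (0 : ℝ) T :=
    fun t => ⟨le_max_left _ _, max_le hT0 (min_le_right _ _)⟩
  have hclid : ∀ t ∈ Set.Icc (0 : ℝ) T, cl t = t := fun t ht => by
    rcases ht with ⟨h1, h2⟩
    simp [hcldef, min_eq_left h2, max_eq_right h1]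
  -- continuity in time of the clamped slices
  have hcφb : ∀ x, Continuous fun t => φb (cl t) x := fun x => by
    rw [continuous_iff_continuousAt]
    intro t
    exact ((hφb (cl t) (hclmem t) x).1.continuousAt).comp hclcont.continuousAt
  have hcψ : ∀ x, Continuous fun t => ψ (cl t) x := fun x => by
    rw [continuous_iff_continuousAt]
    intro t
    exact ((hψ (cl t) (hclmem t) x).1.continuousAt).comp hclcont.continuousAt
  -- uniform decay bounds
  obtain ⟨Cb, hCb0, hCb⟩ := uniform_decay φb hφbB
  obtain ⟨Cψ, hCψ0, hCψ⟩ := uniform_decay ψ hψB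
  obtain ⟨MV, hMV⟩ := hVtb
  have hMV' : ∀ x, ‖((Vt x : ℝ) : ℂ)‖ ≤ max MV 0 := fun x => by
    calc ‖((Vt x : ℝ) : ℂ)‖ = |Vt x| := by rw [Complex.norm_real, Real.norm_eq_abs]
      _ ≤ MV := hMV x
      _ ≤ max MV 0 := le_max_left _ _
  have hψsup : ∀ t x, ‖ψ (cl t) x‖ ≤ Cψ := by
    intro t x
    have h1 : (1 : ℝ) ≤ (1 + ‖x‖) ^ (d + 1) :=
      one_le_pow₀ (by linarith [norm_nonneg x])
    have h2 : ((1 + ‖x‖) ^ (d + 1))⁻¹ ≤ 1 := inv_le_one_of_one_le₀ h1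
    calc ‖ψ (cl t) x‖ ≤ Cψ * ((1 + ‖x‖) ^ (d + 1))⁻¹ := hCψ (cl t) (hclmem t) x
      _ ≤ Cψ * 1 := mul_le_mul_of_nonneg_left h2 hCψ0
      _ = Cψ := mul_one _
  -- the kernel and its bound
  set K : ℝ → EuclideanSpace ℝ (Fin d) → ℂ :=
    fun s x => ((Vt x : ℝ) : ℂ) * (φb (cl s) x * (starRingEnd ℂ) (ψ (cl s) x)) with hKdef
  set B0 : EuclideanSpace ℝ (Fin d) → ℝ :=
    fun x => (max MV 0 * (Cb * Cψ)) * ((1 + ‖x‖) ^ (d + 1))⁻¹ with hB0def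
  have hbound : ∀ s x, ‖K s x‖ ≤ B0 x := by
    intro s x
    have hinv0 : (0 : ℝ) ≤ ((1 + ‖x‖) ^ (d + 1))⁻¹ := by positivity
    calc ‖K s x‖ = ‖((Vt x : ℝ) : ℂ)‖ * (‖φb (cl s) x‖ * ‖(starRingEnd ℂ) (ψ (cl s) x)‖) := by
          rw [hKdef]; simp [norm_mul]
      _ ≤ max MV 0 * ((Cb * ((1 + ‖x‖) ^ (d + 1))⁻¹) * Cψ) := by
          refine mul_le_mul (hMV' x) ?_ (by positivity) (le_max_right MV 0)
          refine mul_le_mul (hCb (cl s) (hclmem s) x) ?_ (norm_nonneg _) (by positivity)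
          rw [RCLike.norm_conj]
          exact hψsup s x
      _ = B0 x := by rw [hB0def]; ring
  have hB0cont : Continuous B0 := by
    rw [hB0def]
    exact continuous_const.mul (((continuous_const.add continuous_norm).pow _).inv₀
      (fun x => (pow_pos (add_pos_of_pos_of_nonneg one_pos (norm_nonneg x)) _).ne'))
  have hB0int : Integrable B0 (volume : Measure (EuclideanSpace ℝ (Fin d))) := by
    rw [hB0def]
    exact (integrable_decay d).const_mul _
  have hKxcont : ∀ s, Continuous (K s) := fun s =>
    (Complex.continuous_ofReal.comp hVtc).mul
      ((φb (cl s)).continuous.mul (continuous_star.comp (ψ (cl s)).continuous))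
  have hKtcont : ∀ x, Continuous fun s => K s x := fun x =>
    continuous_const.mul ((hcφb x).mul (continuous_star.comp (hcψ x)))
  -- the time slice integral
  set G : ℝ → ℂ := fun s => ∫ x, K s x with hGdef
  have hGcont : Continuous G := by
    rw [hGdef]
    exact continuous_of_dominated (fun s => (hKxcont s).aestronglyMeasurable)
      (fun s => Filter.Eventually.of_forall (hbound s)) hB0int
      (Filter.Eventually.of_forall fun x => hKtcont x)
  -- the L² pairing
  set F : ℝ → ℂ := fun s => (inner ℂ ((hψM s).toLp) ((hφtM s).toLp) : ℂ) with hFdef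
  have hF' : ∀ t ∈ Set.Icc (0 : ℝ) T, HasDerivAt F ((1 / (Complex.I * ε)) * G t) t := by
    intro t ht
    have hd := HasDerivAt.inner ℂ (hψL2 t ht) (hφtL2 t ht)
    have hval : (inner ℂ ((hψM t).toLp) ((hφtD t).toLp) : ℂ)
        + inner ℂ ((hψD t).toLp) ((hφtM t).toLp) = (1 / (Complex.I * ε)) * G t := by
      rw [inner_toLp_eq (hψM t) (hφtD t), inner_toLp_eq (hψD t) (hφtM t)]
      beta_reduce
      rw [key_value hεne Vb Vt hVbb hVbc ⟨MV, hMV⟩ hVtc (ψ t) (φt t) (φb t)]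
      congr 1
      rw [hGdef, hKdef]
      beta_reduce
      rw [hclid t ht]
    exact hval ▸ hd
  -- fundamental theorem of calculus
  have hFTC : ∫ s in (0 : ℝ)..T, (1 / (Complex.I * ε)) * G s = F T - F 0 := by
    refine intervalIntegral.integral_eq_sub_of_hasDerivAt (fun t ht' => ?_) ?_
    · exact hF' t (by rwa [Set.uIcc_of_le hT0] at ht')
    · exact (continuous_const.mul hGcont).intervalIntegrable 0 T
  have hF0 : F 0 = 0 := by
    rw [hFdef]
    beta_reduce
    rw [inner_toLp_eq (hψM 0) (hφtM 0)]
    simp [hφt0]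
  have hFT : F T = ∫ x, φt T x * (starRingEnd ℂ) (ψ T x) := by
    rw [hFdef]
    beta_reduce
    rw [inner_toLp_eq (hψM T) (hφtM T)]
    exact integral_congr_ae (Filter.Eventually.of_forall fun x => mul_comm _ _)
  -- product integrability for Fubini
  set μT : Measure ℝ := (volume : Measure ℝ).restrict (Set.Ioc 0 T) with hμTdef
  have hfin : μT Set.univ ≠ ⊤ := by
    rw [hμTdef, Measure.restrict_apply_univ]
    simp [Real.volume_Ioc]
  have hB2 : Integrable (fun p : ℝ × EuclideanSpace ℝ (Fin d) => B0 p.2)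
      (μT.prod (volume : Measure (EuclideanSpace ℝ (Fin d)))) := by
    have hmap : Integrable B0 (Measure.map Prod.snd
        (μT.prod (volume : Measure (EuclideanSpace ℝ (Fin d))))) := by
      rw [Measure.map_snd_prod]
      exact hB0int.smul_measure hfin
    exact (integrable_map_measure hB0cont.aestronglyMeasurable
      measurable_snd.aemeasurable).mp hmap
  have hKunc : Integrable (Function.uncurry K)
      (μT.prod (volume : Measure (EuclideanSpace ℝ (Fin d)))) := by
    refine hB2.mono' ?_ (Filter.Eventually.of_forall fun p => hbound p.1 p.2)
    exact (stronglyMeasurable_uncurry_of_continuous_of_stronglyMeasurable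
      hKtcont (fun s => (hKxcont s).stronglyMeasurable)).aestronglyMeasurable
  have hswap : ∫ s in Set.Ioc (0 : ℝ) T, G s = ∫ x, ∫ s in Set.Ioc (0 : ℝ) T, K s x := by
    rw [hGdef]
    beta_reduce
    exact integral_integral_swap hKunc
  -- inner time integral identification
  have hinnerT : ∀ x, (∫ s in Set.Ioc (0 : ℝ) T, K s x)
      = ((Vt x : ℝ) : ℂ) * ∫ t in (0 : ℝ)..T, φb t x * (starRingEnd ℂ) (ψ t x) := by
    intro x
    have h1 : (∫ s in Set.Ioc (0 : ℝ) T, K s x)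
        = ((Vt x : ℝ) : ℂ) * ∫ s in Set.Ioc (0 : ℝ) T,
            (φb (cl s) x * (starRingEnd ℂ) (ψ (cl s) x)) := by
      rw [hKdef]
      beta_reduce
      exact integral_const_mul _ _
    rw [h1]
    congr 1
    rw [← intervalIntegral.integral_of_le hT0]
    refine intervalIntegral.integral_congr fun s hs => ?_
    rw [Set.uIcc_of_le hT0] at hs
    rw [hclid s hs]
  -- assemble
  calc ∫ x, φt T x * (starRingEnd ℂ) (ψ T x) = F T := hFT.symm
    _ = F T - F 0 := by rw [hF0, sub_zero]
    _ = ∫ s in (0 : ℝ)..T, (1 / (Complex.I * ε)) * G s := hFTC.symm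
    _ = (1 / (Complex.I * ε)) * ∫ s in (0 : ℝ)..T, G s := by
        rw [intervalIntegral.integral_const_mul]
    _ = (1 / (Complex.I * ε)) * ∫ s in Set.Ioc (0 : ℝ) T, G s := by
        rw [intervalIntegral.integral_of_le hT0]
    _ = (1 / (Complex.I * ε)) * ∫ x, ∫ s in Set.Ioc (0 : ℝ) T, K s x := by rw [hswap]
    _ = (1 / (Complex.I * ε)) * ∫ x, ((Vt x : ℝ) : ℂ) *
          ∫ t in (0 : ℝ)..T, φb t x * (starRingEnd ℂ) (ψ t x) := by
        congr 1
        exact integral_congr_ae (Filter.Eventually.of_forall fun x => hinnerT x)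
    _ = ∫ x, (1 / (Complex.I * ε)) * (((Vt x : ℝ) : ℂ) *
          ∫ t in (0 : ℝ)..T, φb t x * (starRingEnd ℂ) (ψ t x)) := by
        rw [integral_const_mul]
    _ = ∫ x : EuclideanSpace ℝ (Fin d), ((Vt x : ℝ) : ℂ) *
          ((1 / (Complex.I * ε)) * ∫ t in (0 : ℝ)..T, φb t x * (starRingEnd ℂ) (ψ t x)) := by
        exact integral_congr_ae (Filter.Eventually.of_forall fun x => by ring)


end
end
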